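/- Let A, C : ℝ → ℝ be continuously differentiable with A, C ≥ 0 on [0,1]. Let N ≥ 1 and let A_N be the (N+1)×(N+1) tridiagonal matrix with entries (A_N)_{k,k-1} = N·A((k−1)/N), (A_N)_{k,k} = −N·(A(k/N)+C(k/N)), (A_N)_{k,k+1} = N·C((k+1)/N) (with the convention that the A-terms vanish for k = 0 and the C-terms vanish for k = N). Then for any d₁ > ‖A'‖_∞ + ‖C'‖_∞ (sup norms over [0,1]) and any vector v ∈ ℂ^{N+1}, if k is an index with |v_k| = ‖v‖_∞ > 0, then Re( ((A_N − d₁ I) v)_k · conj(v_k)/|v_k| ) < 0. -/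

import Mathlib

open scoped Matrix

/-- The tridiagonal transition-rate matrix of the one-step process with
density-dependent rates, with the convention that the `A`-terms vanish in
row `k = 0` and the `C`-terms vanish in row `k = N`. -/
noncomputable def triMat (A C : ℝ → ℝ) (N : ℕ) :
    Matrix (Fin (N + 1)) (Fin (N + 1)) ℂ := fun k l =>
  if (l : ℕ) + 1 = (k : ℕ) then
    (((N : ℝ) * A ((((k : ℕ) - 1 : ℕ) : ℝ) / N) : ℝ) : ℂ)
  else if l = k then
    ((-( (N : ℝ) * ((if (k : ℕ) = 0 then 0 else A ((k : ℕ) / N))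
        + (if (k : ℕ) = N then 0 else C ((k : ℕ) / N)))) : ℝ) : ℂ)
  else if (k : ℕ) + 1 = (l : ℕ) then
    (((N : ℝ) * C (((k : ℕ) + 1 : ℝ) / N) : ℝ) : ℂ)
  else 0

/-- Mean value bound: for a C¹ function `f` and `x, y ∈ [0,1]`,
`f y - f x ≤ M * |y - x|` where `M` is the sup of `|f'|` on `[0,1]`. -/
lemma mvt_bound (f : ℝ → ℝ) (hf : ContDiff ℝ 1 f) {x y : ℝ}
    (hx : x ∈ Set.Icc (0 : ℝ) 1) (hy : y ∈ Set.Icc (0 : ℝ) 1) :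
    f y - f x ≤ sSup ((fun t => |deriv f t|) '' Set.Icc (0 : ℝ) 1) * |y - x| := by
  set M := sSup ((fun t => |deriv f t|) '' Set.Icc (0 : ℝ) 1) with hM
  have hbdd : BddAbove ((fun t => |deriv f t|) '' Set.Icc (0 : ℝ) 1) :=
    (isCompact_Icc.image (continuous_abs.comp (hf.continuous_deriv le_rfl))).bddAbove
  have hle : ∀ t ∈ Set.Icc (0 : ℝ) 1, ‖deriv f t‖ ≤ M := fun t ht =>
    le_csSup hbdd ⟨t, ht, rfl⟩
  have hdiff : ∀ t ∈ Set.Icc (0 : ℝ) 1, DifferentiableAt ℝ f t :=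
    fun t _ => hf.differentiable one_ne_zero t
  calc f y - f x ≤ ‖f y - f x‖ := le_abs_self _
    _ ≤ M * ‖y - x‖ :=
      (convex_Icc (0:ℝ) 1).norm_image_sub_le_of_norm_deriv_le hdiff hle hx hy
    _ = M * |y - x| := rfl

lemma sSup_abs_deriv_nonneg (f : ℝ → ℝ) (hf : ContDiff ℝ 1 f) :
    0 ≤ sSup ((fun t => |deriv f t|) '' Set.Icc (0 : ℝ) 1) := by
  have hbdd : BddAbove ((fun t => |deriv f t|) '' Set.Icc (0 : ℝ) 1) :=
    (isCompact_Icc.image (continuous_abs.comp (hf.continuous_deriv le_rfl))).bddAbove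
  exact le_trans (abs_nonneg _)
    (le_csSup hbdd ⟨0, Set.left_mem_Icc.mpr zero_le_one, rfl⟩)

/-- dissipativity of `A_N - d₁ I` in the maximum norm. -/
theorem stmt_1 (A C : ℝ → ℝ) (hA : ContDiff ℝ 1 A) (hC : ContDiff ℝ 1 C)
    (hA0 : ∀ x ∈ Set.Icc (0 : ℝ) 1, 0 ≤ A x)
    (hC0 : ∀ x ∈ Set.Icc (0 : ℝ) 1, 0 ≤ C x)
    (N : ℕ) (hN : 1 ≤ N) (d₁ : ℝ)
    (hd : sSup ((fun x => |deriv A x|) '' Set.Icc (0 : ℝ) 1)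
        + sSup ((fun x => |deriv C x|) '' Set.Icc (0 : ℝ) 1) < d₁)
    (v : Fin (N + 1) → ℂ) (k : Fin (N + 1))
    (hk : ∀ j, ‖v j‖ ≤ ‖v k‖)
    (hpos : 0 < ‖v k‖) :
    ((((triMat A C N).mulVec v - d₁ • v) k * (starRingEnd ℂ) (v k)
      / (‖v k‖ : ℂ)).re) < 0 := by
  classical
  set MA := sSup ((fun x => |deriv A x|) '' Set.Icc (0 : ℝ) 1) with hMAdef
  set MC := sSup ((fun x => |deriv C x|) '' Set.Icc (0 : ℝ) 1) with hMCdef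
  have hMA0 : 0 ≤ MA := sSup_abs_deriv_nonneg A hA
  have hMC0 : 0 ≤ MC := sSup_abs_deriv_nonneg C hC
  set R := ‖v k‖ with hRdef
  have hNpos : (0 : ℝ) < N := by positivity
  have hk_le : (k : ℕ) ≤ N := Nat.lt_succ_iff.mp k.isLt
  -- real entries of the row k
  set r : Fin (N + 1) → ℝ := fun l => (triMat A C N k l).re with hrdef
  have hentry : ∀ l, triMat A C N k l = ((r l : ℝ) : ℂ) := by
    intro l
    simp only [hrdef, triMat]
    split_ifs <;> simp
  -- membership helper
  have hmem : ∀ m : ℕ, m ≤ N → ((m : ℝ) / N) ∈ Set.Icc (0 : ℝ) 1 := by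
    intro m hm
    constructor
    · positivity
    · rw [div_le_one hNpos]
      exact_mod_cast hm
  -- values
  set aval : ℝ := (N : ℝ) * A ((((k : ℕ) - 1 : ℕ) : ℝ) / N) with haval
  set bval : ℝ := -((N : ℝ) * ((if (k : ℕ) = 0 then 0 else A ((k : ℕ) / N))
        + (if (k : ℕ) = N then 0 else C ((k : ℕ) / N)))) with hbval
  set cval : ℝ := (N : ℝ) * C (((k : ℕ) + 1 : ℝ) / N) with hcval
  have haval0 : 0 ≤ aval := by
    rw [haval]
    have h1 : ((k : ℕ) - 1 : ℕ) ≤ N := by omega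
    have := hA0 _ (hmem _ h1)
    positivity
  have hcval0 : (k : ℕ) < N → 0 ≤ cval := by
    intro hlt
    rw [hcval]
    have h1 : ((k : ℕ) + 1 : ℕ) ≤ N := by omega
    have h2 := hC0 _ (hmem _ h1)
    have hcast : (((k : ℕ) + 1 : ℕ) : ℝ) = ((k : ℕ) : ℝ) + 1 := by push_cast; ring
    rw [hcast] at h2
    positivity
  have hsplit : ∀ l, r l =
      (if (l : ℕ) + 1 = (k : ℕ) then aval else 0)
      + (if l = k then bval else 0)
      + (if (k : ℕ) + 1 = (l : ℕ) then cval else 0) := by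
    intro l
    by_cases h1 : (l : ℕ) + 1 = (k : ℕ)
    · have h2 : ¬ l = k := by rw [Fin.ext_iff]; omega
      have h3 : ¬ ((k : ℕ) + 1 = (l : ℕ)) := by omega
      simp only [hrdef, triMat, if_pos h1, if_neg h2, if_neg h3, Complex.ofReal_re]
      rw [haval]; ring
    · by_cases h2 : l = k
      · have h3 : ¬ ((k : ℕ) + 1 = (l : ℕ)) := by rw [Fin.ext_iff] at h2; omega
        simp only [hrdef, triMat, if_neg h1, if_pos h2, if_neg h3, Complex.ofReal_re]
        rw [hbval]; ring
      · by_cases h3 : (k : ℕ) + 1 = (l : ℕ)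
        · simp only [hrdef, triMat, if_neg h1, if_neg h2, if_pos h3, Complex.ofReal_re]
          rw [hcval]; ring
        · simp only [hrdef, triMat, if_neg h1, if_neg h2, if_neg h3, Complex.ofReal_re,
            Complex.zero_re]
          ring
  -- off-diagonal entries are nonnegative
  have hnn : ∀ l, l ≠ k → 0 ≤ r l := by
    intro l hl
    rw [hsplit l, if_neg hl]
    have hlN : (l : ℕ) ≤ N := Nat.lt_succ_iff.mp l.isLt
    have t1 : 0 ≤ (if (l : ℕ) + 1 = (k : ℕ) then aval else 0) := by
      split_ifs; exacts [haval0, le_refl 0]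
    have t3 : 0 ≤ (if (k : ℕ) + 1 = (l : ℕ) then cval else 0) := by
      split_ifs with h
      · exact hcval0 (by omega)
      · exact le_refl 0
    linarith
  set S := ∑ l, r l with hSdef
  have hT1 : (∑ l : Fin (N+1), if (l : ℕ) + 1 = (k : ℕ) then aval else 0)
      = if 1 ≤ (k : ℕ) then aval else 0 := by
    rcases Nat.eq_zero_or_pos (k : ℕ) with h0 | h0
    · rw [if_neg (by omega)]
      exact Finset.sum_eq_zero fun l _ => if_neg (by omega)
    · rw [if_pos (show 1 ≤ (k : ℕ) by omega)]
      have heq : ∀ l : Fin (N + 1), ((l : ℕ) + 1 = (k : ℕ)) ↔ l = ⟨(k : ℕ) - 1, by omega⟩ := by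
        intro l; rw [Fin.ext_iff]; simp; omega
      simp_rw [heq]
      simp
  have hT3 : (∑ l : Fin (N+1), if (k : ℕ) + 1 = (l : ℕ) then cval else 0)
      = if (k : ℕ) < N then cval else 0 := by
    rcases lt_or_ge (k : ℕ) N with h0 | h0
    · rw [if_pos h0]
      have heq : ∀ l : Fin (N + 1), ((k : ℕ) + 1 = (l : ℕ)) ↔ l = ⟨(k : ℕ) + 1, by omega⟩ := by
        intro l; rw [Fin.ext_iff]; simp; omega
      simp_rw [heq]
      simp
    · rw [if_neg (by omega)]
      refine Finset.sum_eq_zero fun l _ => if_neg ?_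
      have := Nat.lt_succ_iff.mp l.isLt
      omega
  have hT2 : (∑ l : Fin (N+1), if l = k then bval else 0) = bval := by simp
  have hSval : S = (if 1 ≤ (k : ℕ) then aval else 0) + bval
      + (if (k : ℕ) < N then cval else 0) := by
    simp only [hSdef]
    simp_rw [hsplit]
    rw [Finset.sum_add_distrib, Finset.sum_add_distrib, hT1, hT2, hT3]
  -- bound the row sum
  have hSle : S ≤ MA + MC := by
    have hCA : ∀ m : ℕ, m < N →
        (N : ℝ) * A (((m : ℕ) : ℝ) / N) - (N : ℝ) * A (((m + 1 : ℕ) : ℝ) / N) ≤ MA := by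
      intro m hm
      have h1 := mvt_bound A hA (hmem (m + 1) (by omega)) (hmem m (by omega))
      have habs : |((m : ℕ) : ℝ) / N - ((m + 1 : ℕ) : ℝ) / N| = 1 / N := by
        have he : ((m : ℕ) : ℝ) / N - ((m + 1 : ℕ) : ℝ) / N = -(1 / N) := by
          push_cast; field_simp; ring
        rw [he, abs_neg, abs_of_nonneg (by positivity)]
      rw [habs] at h1
      have := mul_le_mul_of_nonneg_left h1 (le_of_lt hNpos)
      calc (N : ℝ) * A (((m : ℕ) : ℝ) / N) - (N : ℝ) * A (((m + 1 : ℕ) : ℝ) / N)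
          = (N : ℝ) * (A (((m : ℕ) : ℝ) / N) - A (((m + 1 : ℕ) : ℝ) / N)) := by ring
        _ ≤ (N : ℝ) * (MA * (1 / N)) := this
        _ = MA := by field_simp
    have hCC : ∀ m : ℕ, m < N →
        (N : ℝ) * C (((m + 1 : ℕ) : ℝ) / N) - (N : ℝ) * C (((m : ℕ) : ℝ) / N) ≤ MC := by
      intro m hm
      have h1 := mvt_bound C hC (hmem m (by omega)) (hmem (m + 1) (by omega))
      have habs : |((m + 1 : ℕ) : ℝ) / N - ((m : ℕ) : ℝ) / N| = 1 / N := by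
        have he : ((m + 1 : ℕ) : ℝ) / N - ((m : ℕ) : ℝ) / N = 1 / N := by
          push_cast; field_simp; ring
        rw [he, abs_of_nonneg (by positivity)]
      rw [habs] at h1
      have := mul_le_mul_of_nonneg_left h1 (le_of_lt hNpos)
      calc (N : ℝ) * C (((m + 1 : ℕ) : ℝ) / N) - (N : ℝ) * C (((m : ℕ) : ℝ) / N)
          = (N : ℝ) * (C (((m + 1 : ℕ) : ℝ) / N) - C (((m : ℕ) : ℝ) / N)) := by ring
        _ ≤ (N : ℝ) * (MC * (1 / N)) := this
        _ = MC := by field_simp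
    rcases Nat.eq_zero_or_pos (k : ℕ) with hk0 | hk1
    · -- k = 0 : S = cval + bval with bval = -N C(0/N)
      have hkN : (k : ℕ) ≠ N := by omega
      rw [hSval, if_neg (show ¬ 1 ≤ (k : ℕ) by omega), if_pos (show (k : ℕ) < N by omega)]
      rw [hbval, if_pos hk0, if_neg hkN, hcval]
      have := hCC 0 (by omega)
      simp only [hk0] at *
      push_cast at this ⊢
      nlinarith [hMA0]
    · rcases eq_or_lt_of_le hk_le with hkN | hkN
      · -- k = N
        rw [hSval, if_pos (show 1 ≤ (k : ℕ) by omega), if_neg (show ¬ (k : ℕ) < N by omega)]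
        rw [hbval, if_neg (show ¬ (k : ℕ) = 0 by omega), if_pos hkN, haval]
        have := hCA ((k : ℕ) - 1) (by omega)
        have hc1 : ((k : ℕ) - 1 + 1 : ℕ) = (k : ℕ) := by omega
        rw [hc1] at this
        nlinarith [hMC0]
      · -- interior
        rw [hSval, if_pos (show 1 ≤ (k : ℕ) by omega), if_pos hkN]
        rw [hbval, if_neg (show ¬ (k : ℕ) = 0 by omega), if_neg (show ¬ (k : ℕ) = N by omega),
          haval, hcval]
        have h1 := hCA ((k : ℕ) - 1) (by omega)
        have hc1 : ((k : ℕ) - 1 + 1 : ℕ) = (k : ℕ) := by omega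
        rw [hc1] at h1
        have h2 := hCC (k : ℕ) (by omega)
        have hc2 : (((k : ℕ) + 1 : ℕ) : ℝ) = ((k : ℕ) : ℝ) + 1 := by push_cast; ring
        rw [hc2] at h2
        linarith
  -- conjugate identity
  have hconj : v k * (starRingEnd ℂ) (v k) = ((R ^ 2 : ℝ) : ℂ) := by
    rw [Complex.mul_conj]
    norm_cast
    rw [Complex.normSq_eq_norm_sq]
  -- compute the numerator
  have hz : ((triMat A C N).mulVec v - d₁ • v) k * (starRingEnd ℂ) (v k)
      = (∑ l, ((r l : ℝ) : ℂ) * (v l * (starRingEnd ℂ) (v k))) - ((d₁ * R ^ 2 : ℝ) : ℂ) := by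
    simp only [Pi.sub_apply, Pi.smul_apply, Matrix.mulVec, dotProduct]
    rw [sub_mul, Finset.sum_mul]
    congr 1
    · exact Finset.sum_congr rfl fun l _ => by rw [hentry l, mul_assoc]
    · rw [Complex.real_smul, mul_assoc, hconj]
      push_cast
      ring
  have hzre : (((triMat A C N).mulVec v - d₁ • v) k * (starRingEnd ℂ) (v k)).re
      = (∑ l, r l * (v l * (starRingEnd ℂ) (v k)).re) - d₁ * R ^ 2 := by
    rw [hz]
    simp only [Complex.sub_re, Complex.re_sum, Complex.mul_re, Complex.ofReal_re,
      Complex.ofReal_im, zero_mul, sub_zero]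
  -- bound each term
  have hterm : ∀ l, r l * (v l * (starRingEnd ℂ) (v k)).re ≤ r l * R ^ 2 := by
    intro l
    rcases eq_or_ne l k with h | h
    · subst h
      rw [hconj, Complex.ofReal_re]
    · have h1 : (v l * (starRingEnd ℂ) (v k)).re ≤ R ^ 2 := by
        refine (Complex.re_le_norm _).trans ?_
        rw [norm_mul, Complex.norm_conj]
        calc ‖v l‖ * ‖v k‖ ≤ R * R :=
              mul_le_mul_of_nonneg_right (hk l) (norm_nonneg _)
          _ = R ^ 2 := by ring
      exact mul_le_mul_of_nonneg_left h1 (hnn l h)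
  have hsum : (∑ l, r l * (v l * (starRingEnd ℂ) (v k)).re) ≤ S * R ^ 2 := by
    rw [hSdef, Finset.sum_mul]
    exact Finset.sum_le_sum fun l _ => hterm l
  have hnum : (((triMat A C N).mulVec v - d₁ • v) k * (starRingEnd ℂ) (v k)).re < 0 := by
    rw [hzre]
    have hR2 : 0 < R ^ 2 := by positivity
    have : S * R ^ 2 ≤ (MA + MC) * R ^ 2 :=
      mul_le_mul_of_nonneg_right hSle (le_of_lt hR2)
    nlinarith
  rw [Complex.div_ofReal_re]
  exact div_neg_of_neg_of_pos hnum hpos
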